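/- Let R ⊆ ℕ be a good set and α an irrational real number. Suppose ρ ∈ L¹(μ_{R,α}) is nonnegative with ∫ ρ dμ_{R,α} = 1 and ρ is unbounded, i.e. ρ ∉ L^∞(μ_{R,α}), and suppose the good set S ⊆ R satisfies μ_{S,α} = ρ·μ_{R,α}. Then S has zero relative mean in R: M_R(S) = 0 (equivalently, its relative upper density ‖S‖_{1,R} is 0). -/

import Mathlib

open MeasureTheory Filter Topology
open scoped BigOperators

noncomputable section

open Classical in
/-- `S(N) = S ∩ {1,…,N}` as a `Finset`. -/
def initSeg (S : Set ℕ) (N : ℕ) : Finset ℕ := (Finset.Icc 1 N).filter (· ∈ S)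

/-- The average `(1/#S(N)) ∑_{s ∈ S(N)} f (sα mod 1)`. -/
def empAvg (S : Set ℕ) (α : ℝ) (N : ℕ) (f : UnitAddCircle → ℝ) : ℝ :=
  ((initSeg S N).card : ℝ)⁻¹ * ∑ s ∈ initSeg S N, f (((s : ℝ) * α : ℝ) : UnitAddCircle)

/-- `μ` is the weak limit of the empirical measures `(1/#S(N)) ∑_{s ∈ S(N)} δ_{sα mod 1}`. -/
def IsLimitMeasure (S : Set ℕ) (α : ℝ) (μ : Measure UnitAddCircle) : Prop :=
  ∀ f : C(UnitAddCircle, ℝ),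
    Tendsto (fun N => empAvg S α N (fun x => f x)) atTop (𝓝 (∫ x, f x ∂μ))

/-- A good set: infinite, and for every `α` the empirical measures converge weakly
to some (probability) limit measure `μ_{S,α}`. -/
def IsGoodSet (S : Set ℕ) : Prop :=
  S.Infinite ∧ ∀ α : ℝ, ∃ μ : Measure UnitAddCircle, IsProbabilityMeasure μ ∧ IsLimitMeasure S α μ

/-- `R` is sublacunary: `log N / #R(N) → 0`. -/
def Sublacunary (R : Set ℕ) : Prop :=
  Tendsto (fun N : ℕ => Real.log N / ((initSeg R N).card : ℝ)) atTop (𝓝 0)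

open Classical in
/-- `#{n < N : r_n ∈ S}` where `(r_n)` is the increasing (0-indexed) enumeration of `R`. -/
def relCount (R S : Set ℕ) (N : ℕ) : ℕ :=
  ((Finset.range N).filter (fun n => Nat.nth (· ∈ R) n ∈ S)).card

/-- Weighted average `(1/∑_{n<N} w n) ∑_{n<N} w n · f (r_n β mod 1)`. -/
def wAvg (R : Set ℕ) (w : ℕ → ℝ) (β : ℝ) (N : ℕ) (f : UnitAddCircle → ℝ) : ℝ :=
  (∑ n ∈ Finset.range N, w n)⁻¹ *
    ∑ n ∈ Finset.range N, w n * f (((Nat.nth (· ∈ R) n : ℝ) * β : ℝ) : UnitAddCircle)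

/-- `μ` is the weak limit of the `w`-weighted empirical measures along `R` at `β`. -/
def IsWeightLimit (R : Set ℕ) (w : ℕ → ℝ) (β : ℝ) (μ : Measure UnitAddCircle) : Prop :=
  ∀ f : C(UnitAddCircle, ℝ),
    Tendsto (fun N => wAvg R w β N (fun x => f x)) atTop (𝓝 (∫ x, f x ∂μ))

/-- A good weight on `R` (indexed by the increasing enumeration of `R`). -/
def IsGoodWeight (R : Set ℕ) (w : ℕ → ℝ) : Prop :=
  (∀ n, 0 ≤ w n) ∧ ¬ Summable w ∧
    ∀ β : ℝ, ∃ μ : Measure UnitAddCircle, IsProbabilityMeasure μ ∧ IsWeightLimit R w β μ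

/-- Besicovitch-type seminorm `‖f‖₁ = limsup_N (1/N) ∑_{n<N} |f n|`. -/
def besic (f : ℕ → ℝ) : ℝ := Filter.limsup (fun N => (∑ n ∈ Finset.range N, |f n|) / N) atTop

/-- An integrable weight: approximable in `‖·‖₁` by bounded good weights. -/
def IntegrableWeight (R : Set ℕ) (w : ℕ → ℝ) : Prop :=
  ∀ ε > 0, ∃ v : ℕ → ℝ, IsGoodWeight R v ∧ (∃ C, ∀ n, v n ≤ C) ∧
    besic (fun n => v n - w n) < ε

/-- Total variation distance between two finite Borel measures on the torus. -/
def varDist (μ ν : Measure UnitAddCircle) : ℝ :=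
  ⨆ B : Set UnitAddCircle, ⨆ _ : MeasurableSet B, |(μ B).toReal - (ν B).toReal|

/-- `e(θ) = exp(2πiθ)`. -/
def eC (θ : ℝ) : ℂ := Complex.exp (2 * Real.pi * Complex.I * θ)

/-- `w(R(N)) = ∑_{r ∈ R(N)} w r`. -/
def wSum (R : Set ℕ) (w : ℕ → ℝ) (N : ℕ) : ℝ := ∑ r ∈ initSeg R N, w r

/-- `μ` is the weak limit of `(1/w(R(N))) ∑_{r ∈ R(N)} w r · δ_{rβ mod 1}`. -/
def IsWeightLimitR (R : Set ℕ) (w : ℕ → ℝ) (β : ℝ) (μ : Measure UnitAddCircle) : Prop :=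
  ∀ f : C(UnitAddCircle, ℝ),
    Tendsto
      (fun N => (wSum R w N)⁻¹ * ∑ r ∈ initSeg R N, w r * f (((r : ℝ) * β : ℝ) : UnitAddCircle))
      atTop (𝓝 (∫ x, f x ∂μ))

/-- `f : ℕ → ℂ` has mean `c`. -/
def HasMean (f : ℕ → ℂ) (c : ℂ) : Prop :=
  Tendsto (fun N => (∑ n ∈ Finset.range N, f n) / (N : ℂ)) atTop (𝓝 c)

/-- The seminorm `‖f‖_M = limsup_N |(1/N) ∑_{n<N} f n|`. -/
def meanSeminorm (f : ℕ → ℂ) : ℝ :=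
  Filter.limsup (fun N => ‖(∑ n ∈ Finset.range N, f n) / (N : ℂ)‖) atTop

end
section Aux

open MeasureTheory Filter Topology

/-- `initSeg` is eventually nonempty for an infinite set. -/
lemma initSeg_eventually_nonempty {T : Set ℕ} (hT : T.Infinite) :
    ∀ᶠ N in atTop, (initSeg T N).Nonempty := by
  obtain ⟨t, htT, ht⟩ := hT.exists_gt 0
  filter_upwards [eventually_ge_atTop t] with N hN
  exact ⟨t, by simp [initSeg, Finset.mem_filter, Finset.mem_Icc, ht, hN, htT, Nat.one_le_iff_ne_zero.mpr ht.ne']⟩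

lemma isProb_of_isLimitMeasure {T : Set ℕ} (hT : T.Infinite) {α : ℝ}
    {μ : Measure UnitAddCircle} (h : IsLimitMeasure T α μ) : IsProbabilityMeasure μ := by
  have h1 := h (ContinuousMap.const _ (1 : ℝ))
  have h2 : Tendsto (fun N => empAvg T α N (fun _ => (1:ℝ))) atTop (𝓝 1) := by
    apply Tendsto.congr' _ tendsto_const_nhds
    filter_upwards [initSeg_eventually_nonempty hT] with N hN
    have hc : ((initSeg T N).card : ℝ) ≠ 0 := by
      simpa using Finset.card_ne_zero_of_mem hN.choose_spec
    simp [empAvg, hc]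
  have := tendsto_nhds_unique h1 h2
  simp only [ContinuousMap.const_apply, integral_const, smul_eq_mul, mul_one] at this
  constructor
  rwa [← ENNReal.toReal_eq_one_iff]

end Aux
section AuxB
open MeasureTheory Filter Topology

lemma initSeg_subset {S R : Set ℕ} (hSR : S ⊆ R) (M : ℕ) :
    initSeg S M ⊆ initSeg R M := by
  intro x hx
  simp only [initSeg, Finset.mem_filter] at hx ⊢
  exact ⟨hx.1, hSR hx.2⟩

lemma empAvg_nonneg {T : Set ℕ} {α : ℝ} {M : ℕ} {f : UnitAddCircle → ℝ}
    (hf : ∀ x, 0 ≤ f x) : 0 ≤ empAvg T α M f := by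
  apply mul_nonneg (by positivity)
  exact Finset.sum_nonneg fun i _ => hf _

lemma ratio_mul_empAvg_le {S R : Set ℕ} (hSR : S ⊆ R) (α : ℝ) (M : ℕ)
    {f : UnitAddCircle → ℝ} (hf : ∀ x, 0 ≤ f x) :
    ((initSeg S M).card : ℝ) / ((initSeg R M).card : ℝ) * empAvg S α M f
      ≤ empAvg R α M f := by
  set cS := ((initSeg S M).card : ℝ)
  set cR := ((initSeg R M).card : ℝ)
  have hsum : ∑ s ∈ initSeg S M, f (((s : ℝ) * α : ℝ) : UnitAddCircle)
      ≤ ∑ r ∈ initSeg R M, f (((r : ℝ) * α : ℝ) : UnitAddCircle) :=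
    Finset.sum_le_sum_of_subset_of_nonneg (initSeg_subset hSR M) fun i _ _ => hf _
  by_cases hS0 : (initSeg S M).card = 0
  · have : empAvg S α M f = 0 := by
      have : initSeg S M = ∅ := Finset.card_eq_zero.mp hS0
      simp [empAvg, this]
    rw [this, mul_zero]
    exact empAvg_nonneg hf
  by_cases hR0 : (initSeg R M).card = 0
  · exact absurd (Nat.eq_zero_of_le_zero (hR0 ▸ Finset.card_le_card (initSeg_subset hSR M))) hS0
  have hcS : cS ≠ 0 := Nat.cast_ne_zero.mpr hS0
  have hcR : (0:ℝ) < cR := by positivity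
  have : cS / cR * empAvg S α M f
      = (∑ s ∈ initSeg S M, f (((s : ℝ) * α : ℝ) : UnitAddCircle)) / cR := by
    unfold empAvg; simp only [cS, cR]; rw [div_mul_eq_mul_div, ← mul_assoc, mul_inv_cancel₀ (Nat.cast_ne_zero.mpr hS0), one_mul]
  rw [this, empAvg, inv_mul_eq_div]
  gcongr

end AuxB
section AuxC
open MeasureTheory Filter Topology

lemma setOf_mem_infinite {R : Set ℕ} (hR : R.Infinite) :
    (setOf (· ∈ R)).Infinite := by exact hR

open Classical in
lemma relCount_le_card_initSeg_succ {R S : Set ℕ} (hR : R.Infinite) {N : ℕ} (hN : 1 ≤ N) :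
    relCount R S N ≤ (initSeg S (Nat.nth (· ∈ R) (N - 1))).card + 1 := by
  classical
  have hInf := setOf_mem_infinite hR
  set M := Nat.nth (· ∈ R) (N - 1) with hM
  have hinj : Set.InjOn (Nat.nth (· ∈ R))
      ((Finset.range N).filter (fun n => Nat.nth (· ∈ R) n ∈ S)) :=
    fun a _ b _ h => (Nat.nth_injective hInf) h
  have hmap : ∀ n ∈ (Finset.range N).filter (fun n => Nat.nth (· ∈ R) n ∈ S),
      Nat.nth (· ∈ R) n ∈ insert 0 (initSeg S M) := by
    intro n hn
    simp only [Finset.mem_filter, Finset.mem_range] at hn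
    rcases Nat.eq_zero_or_pos (Nat.nth (· ∈ R) n) with h0 | hpos
    · simp [h0]
    · refine Finset.mem_insert_of_mem ?_
      simp only [initSeg, Finset.mem_filter, Finset.mem_Icc]
      refine ⟨⟨hpos, ?_⟩, hn.2⟩
      exact (Nat.nth_le_nth hInf).mpr (by omega)
  calc relCount R S N ≤ (insert 0 (initSeg S M)).card :=
        Finset.card_le_card_of_injOn _ hmap hinj
    _ ≤ (initSeg S M).card + 1 := Finset.card_insert_le _ _

open Classical in
lemma card_initSeg_nth_le {R : Set ℕ} (hR : R.Infinite) {N : ℕ} (hN : 1 ≤ N) :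
    (initSeg R (Nat.nth (· ∈ R) (N - 1))).card ≤ N := by
  classical
  have hInf := setOf_mem_infinite hR
  set M := Nat.nth (· ∈ R) (N - 1) with hM
  have hsub : initSeg R M ⊆ Finset.image (Nat.nth (· ∈ R)) (Finset.range N) := by
    intro r hr
    simp only [initSeg, Finset.mem_filter, Finset.mem_Icc] at hr
    have hrR : r ∈ R := hr.2
    have hcount : Nat.nth (· ∈ R) (Nat.count (· ∈ R) r) = r := Nat.nth_count hrR
    have hle : Nat.count (· ∈ R) r ≤ N - 1 := by
      rw [← Nat.nth_le_nth hInf, hcount]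
      exact hr.1.2
    refine Finset.mem_image.mpr ⟨Nat.count (· ∈ R) r, Finset.mem_range.mpr (by omega), hcount⟩
  calc (initSeg R M).card ≤ _ := Finset.card_le_card hsub
    _ ≤ N := (Finset.card_image_le).trans (by simp)

end AuxC
section AuxD
open MeasureTheory Filter Topology

lemma memLpTop_of_cont_dom {μ : Measure UnitAddCircle} [IsProbabilityMeasure μ]
    {ρ : UnitAddCircle → ℝ} (hρ0 : 0 ≤ ρ) (hρint : Integrable ρ μ)
    {C : ℝ} (hC : 0 ≤ C)
    (h : ∀ f : C(UnitAddCircle, ℝ), (∀ x, 0 ≤ f x) →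
      ∫ x, f x ∂(μ.withDensity fun x => ENNReal.ofReal (ρ x)) ≤ C * ∫ x, f x ∂μ) :
    MemLp ρ ⊤ μ := by
  set ν := μ.withDensity fun x => ENNReal.ofReal (ρ x) with hνdef
  haveI hνfin : IsFiniteMeasure ν := isFiniteMeasure_withDensity_ofReal hρint.2
  -- Step 1: closed sets
  have h_closed : ∀ F : Set UnitAddCircle, IsClosed F →
      (ν F).toReal ≤ C * (μ F).toReal := by
    intro F hF
    refine le_of_forall_pos_le_add fun ε hε => ?_
    have hε' : (0:ℝ) < ε / (C + 1) := by positivity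
    obtain ⟨U, hFU, hUopen, hU⟩ := Set.exists_isOpen_lt_add F (measure_ne_top μ F)
      (ε := ENNReal.ofReal (ε / (C + 1))) (by simp [hε'.ne', ENNReal.ofReal_eq_zero, not_le, hε'])
    obtain ⟨f, hf0, hf1, hf01⟩ := exists_continuous_zero_one_of_isClosed
      (isClosed_compl_iff.mpr hUopen) hF
      (by rw [Set.disjoint_compl_left_iff_subset]; exact hFU)
    have hfint : Integrable (fun x => f x) ν :=
      f.continuous.integrable_of_hasCompactSupport (HasCompactSupport.of_compactSpace _)
    have hfintμ : Integrable (fun x => f x) μ :=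
      f.continuous.integrable_of_hasCompactSupport (HasCompactSupport.of_compactSpace _)
    have hFm : MeasurableSet F := hF.measurableSet
    have hUm : MeasurableSet U := hUopen.measurableSet
    have h1 : (ν F).toReal ≤ ∫ x, f x ∂ν := by
      rw [← measureReal_def, ← integral_indicator_one hFm]
      refine integral_mono ((integrable_const (1:ℝ)).indicator hFm) hfint ?_
      intro x
      by_cases hx : x ∈ F
      · simp [Set.indicator_of_mem hx, hf1 hx]
      · simpa [Set.indicator_of_notMem hx] using (hf01 x).1
    have h2 : ∫ x, f x ∂μ ≤ (μ U).toReal := by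
      rw [← measureReal_def, ← integral_indicator_one hUm]
      refine integral_mono hfintμ ((integrable_const (1:ℝ)).indicator hUm) ?_
      intro x
      by_cases hx : x ∈ U
      · simpa [Set.indicator_of_mem hx] using (hf01 x).2
      · have : f x = 0 := hf0 (by simpa using hx)
        simp [Set.indicator_of_notMem hx, this]
    have h3 : (μ U).toReal ≤ (μ F).toReal + ε / (C + 1) := by
      have := hU.le
      have hfin : μ F + ENNReal.ofReal (ε / (C + 1)) ≠ ⊤ :=
        ENNReal.add_ne_top.mpr ⟨measure_ne_top _ _, ENNReal.ofReal_ne_top⟩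
      have := ENNReal.toReal_mono hfin this
      rwa [ENNReal.toReal_add (measure_ne_top _ _) ENNReal.ofReal_ne_top,
        ENNReal.toReal_ofReal hε'.le] at this
    calc (ν F).toReal ≤ ∫ x, f x ∂ν := h1
      _ ≤ C * ∫ x, f x ∂μ := h (⟨fun x => f x, f.continuous⟩) (fun x => (hf01 x).1)
      _ ≤ C * (μ U).toReal := by
          refine mul_le_mul_of_nonneg_left h2 hC
      _ ≤ C * ((μ F).toReal + ε / (C + 1)) := mul_le_mul_of_nonneg_left h3 hC
      _ ≤ C * (μ F).toReal + ε := by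
          rw [mul_add]
          have : C * (ε / (C + 1)) ≤ ε := by
            rw [div_eq_inv_mul, ← mul_assoc]
            have : C * (C + 1)⁻¹ ≤ 1 := by
              rw [mul_inv_le_iff₀ (by positivity), one_mul]; linarith
            nlinarith
          linarith
  -- Step 2: all measurable sets
  have h_meas : ∀ B : Set UnitAddCircle, MeasurableSet B →
      ν B ≤ ENNReal.ofReal C * μ B := by
    intro B hB
    rw [MeasurableSet.measure_eq_iSup_isClosed_of_ne_top hB (measure_ne_top ν B)]
    refine iSup_le fun K => iSup_le fun hKB => iSup_le fun hK => ?_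
    have hKfin : ENNReal.ofReal C * μ K ≠ ⊤ :=
      ENNReal.mul_ne_top ENNReal.ofReal_ne_top (measure_ne_top _ _)
    have : ν K ≤ ENNReal.ofReal C * μ K := by
      rw [← ENNReal.toReal_le_toReal (measure_ne_top _ _) hKfin,
        ENNReal.toReal_mul, ENNReal.toReal_ofReal hC]
      exact h_closed K hK
    exact this.trans (mul_le_mul_right (measure_mono hKB) _)
  -- Step 3: a.e. bound
  set ρ' := hρint.1.mk ρ with hρ'def
  have hmk : ρ =ᵐ[μ] ρ' := hρint.1.ae_eq_mk
  have hρ'meas : Measurable ρ' := hρint.1.stronglyMeasurable_mk.measurable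
  have hae : ∀ᵐ x ∂μ, ρ' x ≤ C := by
    have hnull : μ {x | C < ρ' x} = 0 := by
      have hcover : {x | C < ρ' x} ⊆ ⋃ n : ℕ, {x | C + 1 / (n + 1) ≤ ρ' x} := by
        intro x hx
        obtain ⟨n, hn⟩ := exists_nat_one_div_lt (K := ℝ) (sub_pos.mpr hx)
        exact Set.mem_iUnion.mpr ⟨n, by simp only [Set.mem_setOf_eq]; linarith⟩
      refine measure_mono_null hcover (measure_iUnion_null fun n => ?_)
      set ε : ℝ := 1 / (n + 1 : ℝ) with hεdef
      have hεpos : 0 < ε := by positivity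
      set B := {x | C + ε ≤ ρ' x} with hBdef
      have hBm : MeasurableSet B := hρ'meas measurableSet_Ici
      by_contra hμB
      have hμBpos : 0 < μ B := pos_iff_ne_zero.mpr hμB
      have hlow : ENNReal.ofReal (C + ε) * μ B ≤ ν B := by
        rw [hνdef, withDensity_apply _ hBm, ← setLIntegral_const B (ENNReal.ofReal (C + ε))]
        refine setLIntegral_mono_ae
          (ENNReal.measurable_ofReal.comp_aemeasurable hρint.1.aemeasurable.restrict) ?_
        filter_upwards [hmk] with x hx hxB
        exact ENNReal.ofReal_le_ofReal (by rw [hx]; exact hxB)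
      have hhigh : ν B ≤ ENNReal.ofReal C * μ B := h_meas B hBm
      have := (hlow.trans hhigh)
      rw [ENNReal.mul_le_mul_iff_left hμB (measure_ne_top μ B)] at this
      rw [ENNReal.ofReal_le_ofReal_iff hC] at this
      linarith
    filter_upwards [measure_eq_zero_iff_ae_notMem.mp hnull] with x hx
    simpa using hx
  refine memLp_top_of_bound hρint.1 C ?_
  filter_upwards [hmk, hae] with x hx1 hx2
  rw [Real.norm_of_nonneg (hρ0 x), hx1]
  exact hx2

end AuxD

/-- if an unbounded density `ρ` (with mean 1) is represented at an irrational `α`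
by a good set `S ⊆ R`, then `S` has zero relative mean in `R`. -/
theorem unbounded_density_forces_zero_mean (R : Set ℕ) (hR : IsGoodSet R)
    (α : ℝ) (hα : Irrational α)
    (μ : MeasureTheory.Measure UnitAddCircle) (hμ : IsLimitMeasure R α μ)
    (ρ : UnitAddCircle → ℝ) (hρ0 : 0 ≤ ρ) (hρint : MeasureTheory.Integrable ρ μ)
    (hρ1 : ∫ x, ρ x ∂μ = 1) (hbound : ¬ MeasureTheory.MemLp ρ ⊤ μ)
    (S : Set ℕ) (hSR : S ⊆ R) (hS : IsGoodSet S)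
    (hrep : IsLimitMeasure S α (μ.withDensity fun x => ENNReal.ofReal (ρ x))) :
    Tendsto (fun N => (relCount R S N : ℝ) / N) atTop (𝓝 0) := by
  classical
  haveI hμprob : IsProbabilityMeasure μ := isProb_of_isLimitMeasure hR.1 hμ
  set ν := μ.withDensity fun x => ENNReal.ofReal (ρ x) with hνdef
  set u : ℕ → ℝ := fun N => (relCount R S N : ℝ) / N with hudef
  have hu0 : ∀ N, 0 ≤ u N := fun N => by positivity
  have hu1 : ∀ N, u N ≤ 1 := by
    intro N
    rcases Nat.eq_zero_or_pos N with h | h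
    · simp [hudef, h]
    · rw [hudef, div_le_one (by positivity)]
      have : relCount R S N ≤ N := by
        calc relCount R S N ≤ (Finset.range N).card := Finset.card_filter_le _ _
          _ = N := Finset.card_range N
      exact_mod_cast this
  have hBddAbove : IsBoundedUnder (· ≤ ·) atTop u := ⟨1, Filter.eventually_map.mpr (.of_forall hu1)⟩
  have hBddBelow : IsBoundedUnder (· ≥ ·) atTop u := ⟨0, Filter.eventually_map.mpr (.of_forall hu0)⟩
  by_contra hcon
  set d := Filter.limsup u atTop with hddef
  have hliminf0 : (0:ℝ) ≤ Filter.liminf u atTop :=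
    le_liminf_of_le hBddAbove.isCoboundedUnder_ge (.of_forall hu0)
  have hd0 : 0 ≤ d := hliminf0.trans (liminf_le_limsup hBddAbove hBddBelow)
  have hdpos : 0 < d := by
    rcases hd0.lt_or_eq with h | h
    · exact h
    · exact absurd (tendsto_of_le_liminf_of_limsup_le hliminf0 h.ge
        hBddAbove hBddBelow) hcon
  -- the ratio sequence along the enumeration of R
  set a : ℕ → ℝ := fun N =>
    ((initSeg S (Nat.nth (· ∈ R) (N - 1))).card : ℝ) /
      ((initSeg R (Nat.nth (· ∈ R) (N - 1))).card : ℝ) with hadef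
  have ha01 : ∀ N, 0 ≤ a N ∧ a N ≤ 1 := by
    intro N
    constructor
    · positivity
    · rcases Nat.eq_zero_or_pos (initSeg R (Nat.nth (· ∈ R) (N - 1))).card with h | h
      · simp [hadef, h]
      · rw [hadef]
        apply div_le_one_of_le₀
        · exact_mod_cast Finset.card_le_card (initSeg_subset hSR _)
        · positivity
  have hkeyN : ∀ N, 1 ≤ N → u N - 1 / N ≤ a N := by
    intro N hN
    have h1 : relCount R S N ≤ (initSeg S (Nat.nth (· ∈ R) (N - 1))).card + 1 :=
      relCount_le_card_initSeg_succ hR.1 hN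
    have h2 : (initSeg R (Nat.nth (· ∈ R) (N - 1))).card ≤ N :=
      card_initSeg_nth_le hR.1 hN
    set cS := ((initSeg S (Nat.nth (· ∈ R) (N - 1))).card : ℝ) with hcSdef
    set cR := ((initSeg R (Nat.nth (· ∈ R) (N - 1))).card : ℝ) with hcRdef
    have hcS0 : 0 ≤ cS := by positivity
    have hNpos : (0:ℝ) < N := by exact_mod_cast hN
    have hu : u N - 1 / N = ((relCount R S N : ℝ) - 1) / N := by
      rw [hudef]; field_simp
    rcases Nat.eq_zero_or_pos (initSeg R (Nat.nth (· ∈ R) (N - 1))).card with h | h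
    · have hS0 : (initSeg S (Nat.nth (· ∈ R) (N - 1))).card = 0 :=
        Nat.eq_zero_of_le_zero (h ▸ Finset.card_le_card (initSeg_subset hSR _))
      have : relCount R S N ≤ 1 := by omega
      have ha0 : a N = 0 := by simp [hadef, hS0]
      rw [ha0, hu]
      apply div_nonpos_of_nonpos_of_nonneg _ hNpos.le
      have : (relCount R S N : ℝ) ≤ 1 := by exact_mod_cast this
      linarith
    · have hcRpos : (0:ℝ) < cR := by rw [hcRdef]; exact_mod_cast h
      have hrc : (relCount R S N : ℝ) ≤ cS + 1 := by rw [hcSdef]; exact_mod_cast h1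
      have hcRN : cR ≤ (N : ℝ) := by rw [hcRdef]; exact_mod_cast h2
      have hstep1 : ((relCount R S N : ℝ) - 1) / N ≤ cS / N := by
        gcongr
        linarith
      have hstep2 : cS / N ≤ cS / cR := by gcongr
      rw [hu]
      exact (hstep1.trans hstep2)
  -- frequently a is bounded below by d/2
  have hfreq1 : ∃ᶠ N in atTop, 2 * d / 3 < u N :=
    frequently_lt_of_lt_limsup hBddBelow.isCoboundedUnder_le (by rw [← hddef]; linarith)
  have hevent : ∀ᶠ N : ℕ in atTop, (1:ℝ) / N < d / 6 ∧ 1 ≤ N := by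
    have h6 : (0:ℝ) < d / 6 := by linarith
    filter_upwards [tendsto_one_div_atTop_nhds_zero_nat.eventually (gt_mem_nhds h6),
      eventually_ge_atTop 1] with N h1 h2
    exact ⟨h1, h2⟩
  have hfreq : ∃ᶠ N in atTop, d / 2 < a N ∧ 1 ≤ N := by
    refine (hfreq1.and_eventually hevent).mono ?_
    rintro N ⟨hu2, hinv, hN1⟩
    refine ⟨lt_of_lt_of_le ?_ (hkeyN N hN1), hN1⟩
    linarith
  obtain ⟨φ, hφmono, hφ⟩ := extraction_of_frequently_atTop hfreq
  obtain ⟨c, hc_mem, ψ, hψmono, hψtend⟩ :=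
    (isCompact_Icc (a := d/2) (b := 1)).tendsto_subseq
      (x := fun k => a (φ k)) (fun k => ⟨(hφ k).1.le, (ha01 _).2⟩)
  have hcpos : 0 < c := lt_of_lt_of_le (by linarith) hc_mem.1
  set χ : ℕ → ℕ := φ ∘ ψ with hχdef
  set M : ℕ → ℕ := fun k => Nat.nth (· ∈ R) (χ k - 1) with hMdef
  have hInf := setOf_mem_infinite hR.1
  have hMtend : Tendsto M atTop atTop := by
    apply tendsto_atTop_mono _ ((tendsto_sub_atTop_nat 1).comp
      ((hφmono.comp hψmono).tendsto_atTop))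
    intro k
    calc χ k - 1 ≤ Nat.nth (· ∈ R) (χ k - 1) :=
          Nat.le_nth (fun hf => absurd hf hInf)
      _ = M k := rfl
  have hkeyf : ∀ f : C(UnitAddCircle, ℝ), (∀ x, 0 ≤ f x) →
      c * ∫ x, f x ∂ν ≤ ∫ x, f x ∂μ := by
    intro f hf
    have hSlim : Tendsto (fun k => (a (χ k)) * empAvg S α (M k) (fun x => f x)) atTop
        (𝓝 (c * ∫ x, f x ∂ν)) := by
      exact hψtend.mul ((hrep f).comp hMtend)
    have hRlim : Tendsto (fun k => empAvg R α (M k) (fun x => f x)) atTop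
        (𝓝 (∫ x, f x ∂μ)) := (hμ f).comp hMtend
    refine le_of_tendsto_of_tendsto' hSlim hRlim fun k => ?_
    exact ratio_mul_empAvg_le hSR α (M k) hf
  refine hbound (memLpTop_of_cont_dom hρ0 hρint (C := 1 / c) (by positivity) ?_)
  intro f hf
  rw [← hνdef]
  rw [one_div, le_inv_mul_iff₀ hcpos]
  exact hkeyf f hf
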